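/- With the convention π_0 = 0, for admissible S ⊆ {1,...,n-1}, the number #\widehat{P}_B(S,n) of signed permutations with peak set S is even if S contains an even number or if n is odd, and is odd otherwise. -/

import Mathlib

open Finset

/-- Value at (1-indexed) position `i` of the signed permutation represented by a pair
`(σ, ε)`: the value is `±(σ(i)+1)`, negative iff `ε i = true`. Returns 0 out of range. -/
def bval (n : ℕ) (π : Equiv.Perm (Fin n) × (Fin n → Bool)) (i : ℕ) : ℤ :=
  if h : i - 1 < n then
    (if π.2 ⟨i - 1, h⟩ then (-1 : ℤ) else 1) * (((π.1 ⟨i - 1, h⟩ : ℕ) : ℤ) + 1)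
  else 0

/-- Peak set of a signed permutation: positions `i ∈ {2,…,n-1}` with `π_{i-1} < π_i > π_{i+1}`. -/
def bPeakSet (n : ℕ) (π : Equiv.Perm (Fin n) × (Fin n → Bool)) : Finset ℕ :=
  (Finset.Icc 2 (n - 1)).filter fun i =>
    bval n π (i - 1) < bval n π i ∧ bval n π (i + 1) < bval n π i

/-- `#P_B(S,n)`: number of signed permutations in `B_n` with peak set exactly `S`. -/
def PB (n : ℕ) (S : Finset ℕ) : ℕ :=
  (Finset.univ.filter fun π : Equiv.Perm (Fin n) × (Fin n → Bool) => bPeakSet n π = S).card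

/-- Value with the convention `π_0 = 0`. -/
def bvalHat (n : ℕ) (π : Equiv.Perm (Fin n) × (Fin n → Bool)) (i : ℕ) : ℤ :=
  if i = 0 then 0 else bval n π i

/-- Peak set with `π_0 = 0`: positions `i ∈ {1,…,n-1}` with `π_{i-1} < π_i > π_{i+1}`. -/
def bPeakSetHat (n : ℕ) (π : Equiv.Perm (Fin n) × (Fin n → Bool)) : Finset ℕ :=
  (Finset.Icc 1 (n - 1)).filter fun i =>
    bvalHat n π (i - 1) < bvalHat n π i ∧ bvalHat n π (i + 1) < bvalHat n π i

/-- `#P̂_B(S,n)`: signed permutations with `π_0 = 0` prepended and peak set exactly `S`. -/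
def PBhat (n : ℕ) (S : Finset ℕ) : ℕ :=
  (Finset.univ.filter fun π : Equiv.Perm (Fin n) × (Fin n → Bool) => bPeakSetHat n π = S).card

/-- Value at (1-indexed) position `i` of an ordinary permutation of `{1,…,n}`. -/
def sval (n : ℕ) (π : Equiv.Perm (Fin n)) (i : ℕ) : ℤ :=
  if h : i - 1 < n then ((π ⟨i - 1, h⟩ : ℕ) : ℤ) + 1 else 0

/-- Peak set of an ordinary permutation: positions `i ∈ {2,…,n-1}`. -/
def sPeakSet (n : ℕ) (π : Equiv.Perm (Fin n)) : Finset ℕ :=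
  (Finset.Icc 2 (n - 1)).filter fun i =>
    sval n π (i - 1) < sval n π i ∧ sval n π (i + 1) < sval n π i

/-- `#P(S,n)`: number of permutations of `{1,…,n}` with peak set exactly `S`. -/
def PP (n : ℕ) (S : Finset ℕ) : ℕ :=
  (Finset.univ.filter fun π : Equiv.Perm (Fin n) => sPeakSet n π = S).card

def svalHat (n : ℕ) (π : Equiv.Perm (Fin n)) (i : ℕ) : ℤ :=
  if i = 0 then 0 else sval n π i

/-- Peak set with the convention `π_0 = 0`: positions `i ∈ {1,…,n-1}`. -/
def sPeakSetHat (n : ℕ) (π : Equiv.Perm (Fin n)) : Finset ℕ :=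
  (Finset.Icc 1 (n - 1)).filter fun i =>
    svalHat n π (i - 1) < svalHat n π i ∧ svalHat n π (i + 1) < svalHat n π i

/-- `#P̂(S,n)`: permutations of `{1,…,n}` with `π_0 = 0` prepended and peak set exactly `S`. -/
def PPhat (n : ℕ) (S : Finset ℕ) : ℕ :=
  (Finset.univ.filter fun π : Equiv.Perm (Fin n) => sPeakSetHat n π = S).card


lemma lt_iff_pos_of_abs_lt {a b : ℤ} (h : |a| < |b|) : a < b ↔ 0 < b := by
  rcases abs_cases a with ⟨h1, h2⟩ | ⟨h1, h2⟩ <;> rcases abs_cases b with ⟨h3, h4⟩ | ⟨h3, h4⟩ <;>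
    omega

lemma gt_iff_neg_of_abs_lt {a b : ℤ} (h : |a| < |b|) : b < a ↔ b < 0 := by
  rcases abs_cases a with ⟨h1, h2⟩ | ⟨h1, h2⟩ <;> rcases abs_cases b with ⟨h3, h4⟩ | ⟨h3, h4⟩ <;>
    omega

lemma even_card_invol {α : Type*} [DecidableEq α] (f : α → α) :
    ∀ s : Finset α, (∀ a ∈ s, f a ∈ s) → (∀ a ∈ s, f (f a) = a) → (∀ a ∈ s, f a ≠ a) →
      Even s.card := by
  intro s
  induction s using Finset.strongInduction with
  | _ s ih =>
    intro h1 h2 h3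
    rcases s.eq_empty_or_nonempty with rfl | ⟨a, ha⟩
    · simp
    · have hfa := h1 a ha
      have hne := h3 a ha
      have hmem : ∀ b, b ∈ (s.erase (f a)).erase a ↔ b ∈ s ∧ b ≠ a ∧ b ≠ f a := by
        intro b; simp only [mem_erase]; tauto
      have hss : (s.erase (f a)).erase a ⊂ s := by
        refine ⟨(erase_subset _ _).trans (erase_subset _ _), fun hcon => ?_⟩
        have := (hmem a).1 (hcon ha)
        tauto
      have even_t : Even ((s.erase (f a)).erase a).card := by
        refine ih _ hss ?_ ?_ ?_
        · intro b hb
          rw [hmem] at hb ⊢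
          refine ⟨h1 b hb.1, fun hc => ?_, fun hc => ?_⟩
          · exact hb.2.2 (by rw [← h2 b hb.1, hc])
          · exact hb.2.1 (by have := congrArg f hc; rwa [h2 b hb.1, h2 a ha] at this)
        · intro b hb; exact h2 b ((hmem b).1 hb).1
        · intro b hb; exact h3 b ((hmem b).1 hb).1
      have hcard : s.card = ((s.erase (f a)).erase a).card + 2 := by
        have hmem2 : a ∈ s.erase (f a) := by
          rw [mem_erase]; exact ⟨fun hc => hne hc.symm, ha⟩
        rw [card_erase_of_mem hmem2, card_erase_of_mem hfa]
        have : 0 < (s.erase (f a)).card := card_pos.2 ⟨a, hmem2⟩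
        have := card_erase_of_mem hfa
        omega
      rcases even_t with ⟨k, hk⟩
      exact ⟨k + 1, by omega⟩

def gv (n : ℕ) (g : Fin n → Bool) (p : ℕ) : Bool :=
  if h : p - 1 < n then g ⟨p - 1, h⟩ else true

def FTset (n : ℕ) (g : Fin n → Bool) : Finset ℕ :=
  (Icc 1 (n - 1)).filter fun i => gv n g i = false ∧ gv n g (i + 1) = true

def MM (n : ℕ) (S : Finset ℕ) : ℕ :=
  (univ.filter fun g : Fin n → Bool => FTset n g = S).card

def MTc (n : ℕ) (S : Finset ℕ) : ℕ :=
  (univ.filter fun g : Fin (n + 1) → Bool => FTset (n + 1) g = S ∧ g (Fin.last n) = true).card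

def MFc (n : ℕ) (S : Finset ℕ) : ℕ :=
  (univ.filter fun g : Fin (n + 1) → Bool => FTset (n + 1) g = S ∧ g (Fin.last n) = false).card

lemma mem_FTset {n : ℕ} {g : Fin n → Bool} {i : ℕ} :
    i ∈ FTset n g ↔ (1 ≤ i ∧ i ≤ n - 1) ∧ gv n g i = false ∧ gv n g (i + 1) = true := by
  simp [FTset, mem_filter, mem_Icc, and_assoc]

lemma gv_snoc (n : ℕ) (g : Fin (n + 1) → Bool) (b : Bool) (p : ℕ) :
    gv (n + 2) (Fin.snoc g b) p = if p = n + 2 then b else gv (n + 1) g p := by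
  unfold gv
  by_cases hp : p = n + 2
  · subst hp
    rw [if_pos rfl, dif_pos (show n + 2 - 1 < n + 2 by omega)]
    have hidx : (⟨n + 2 - 1, show n + 2 - 1 < n + 2 by omega⟩ : Fin (n + 2)) = Fin.last (n + 1) :=
      Fin.ext (by simp)
    rw [hidx, Fin.snoc_last]
  · rw [if_neg hp]
    by_cases h1 : p - 1 < n + 1
    · rw [dif_pos (show p - 1 < n + 2 by omega), dif_pos h1]
      have hidx : (⟨p - 1, show p - 1 < n + 2 by omega⟩ : Fin (n + 2)) =
          Fin.castSucc ⟨p - 1, h1⟩ := Fin.ext (by simp)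
      rw [hidx]
      exact Fin.snoc_castSucc _ _ _
    · rw [dif_neg (by omega), dif_neg h1]

lemma gv_last (n : ℕ) (g : Fin (n + 1) → Bool) : gv (n + 1) g (n + 1) = g (Fin.last n) := by
  unfold gv
  rw [dif_pos (by omega)]
  exact congrArg g (Fin.ext (by simp))

lemma mem_FT_snoc {n : ℕ} {g : Fin (n + 1) → Bool} {b : Bool} {i : ℕ} :
    i ∈ FTset (n + 2) (Fin.snoc g b) ↔
      (i ∈ FTset (n + 1) g ∨ (i = n + 1 ∧ g (Fin.last n) = false ∧ b = true)) := by
  rw [mem_FTset, mem_FTset]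
  simp only [gv_snoc]
  constructor
  · rintro ⟨⟨hi1, hi2⟩, hF, hT⟩
    by_cases hin : i = n + 1
    · subst hin
      rw [if_neg (by omega)] at hF
      rw [if_pos rfl] at hT
      rw [gv_last] at hF
      exact Or.inr ⟨rfl, hF, hT⟩
    · rw [if_neg (by omega)] at hF
      rw [if_neg (by omega)] at hT
      exact Or.inl ⟨⟨hi1, by omega⟩, hF, hT⟩
  · rintro (⟨⟨hi1, hi2⟩, hF, hT⟩ | ⟨rfl, hg, hb⟩)
    · exact ⟨⟨hi1, by omega⟩, by rw [if_neg (by omega)]; exact hF,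
        by rw [if_neg (by omega)]; exact hT⟩
    · exact ⟨⟨by omega, by omega⟩, by rw [if_neg (by omega), gv_last]; exact hg,
        by rw [if_pos rfl]; exact hb⟩

lemma FT_sub {n : ℕ} (g : Fin n → Bool) : FTset n g ⊆ Icc 1 (n - 1) := filter_subset _ _

lemma MM_split (n : ℕ) (S : Finset ℕ) : MM (n + 1) S = MTc n S + MFc n S := by
  unfold MM MTc MFc
  rw [← Finset.card_filter_add_card_filter_not
    (s := univ.filter fun g : Fin (n + 1) → Bool => FTset (n + 1) g = S)
    (fun g => g (Fin.last n) = true), filter_filter, filter_filter]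
  congr 2
  ext g
  simp [Bool.not_eq_true]

lemma MTc_rec (n : ℕ) (S : Finset ℕ) :
    MTc (n + 1) S = if n + 1 ∈ S then MFc n (S.erase (n + 1)) else MTc n S := by
  by_cases hmem : n + 1 ∈ S
  · rw [if_pos hmem]
    unfold MTc MFc
    refine card_nbij' (fun g => Fin.init g) (fun g' => Fin.snoc g' true) ?_ ?_ ?_ ?_
    · intro g hg
      simp only [mem_coe, mem_filter, mem_univ, true_and] at hg ⊢
      obtain ⟨hFT, hlast⟩ := hg
      have hsnoc : g = Fin.snoc (Fin.init g) true := by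
        rw [← hlast]; exact (Fin.snoc_init_self g).symm
      have hglast : Fin.init g (Fin.last n) = false := by
        by_contra hc
        have hc' : Fin.init g (Fin.last n) = true := by
          rcases Bool.eq_false_or_eq_true (Fin.init g (Fin.last n)) with h | h
          · exact h
          · exact absurd h hc
        have := hmem
        rw [← hFT, hsnoc, mem_FT_snoc] at this
        rcases this with h | h
        · have := (FT_sub _ ) h
          simp only [mem_Icc] at this; omega
        · rw [hc'] at h; simp at h
      constructor
      · ext i
        rw [mem_erase, ← hFT]
        constructor
        · intro hi
          have hb := (FT_sub _) hi
          simp only [mem_Icc] at hb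
          constructor
          · omega
          · rw [hsnoc, mem_FT_snoc]; exact Or.inl hi
        · rintro ⟨hne, hi⟩
          rw [hsnoc, mem_FT_snoc] at hi
          rcases hi with h | h
          · exact h
          · exact absurd h.1 hne
      · exact hglast
    · intro g' hg'
      simp only [mem_coe, mem_filter, mem_univ, true_and] at hg' ⊢
      obtain ⟨hFT, hlast⟩ := hg'
      constructor
      · ext i
        rw [mem_FT_snoc, hFT]
        constructor
        · rintro (h | ⟨rfl, _, _⟩)
          · exact (erase_subset _ _) h
          · exact hmem
        · intro hi
          by_cases hin : i = n + 1
          · exact Or.inr ⟨hin, hlast, rfl⟩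
          · exact Or.inl (by rw [mem_erase]; exact ⟨hin, hi⟩)
      · exact Fin.snoc_last _ _
    · intro g hg
      simp only [mem_coe, mem_filter, mem_univ, true_and] at hg
      rw [← hg.2]; exact Fin.snoc_init_self g
    · intro g' _; exact Fin.init_snoc _ _
  · rw [if_neg hmem]
    unfold MTc
    refine card_nbij' (fun g => Fin.init g) (fun g' => Fin.snoc g' true) ?_ ?_ ?_ ?_
    · intro g hg
      simp only [mem_coe, mem_filter, mem_univ, true_and] at hg ⊢
      obtain ⟨hFT, hlast⟩ := hg
      have hsnoc : g = Fin.snoc (Fin.init g) true := by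
        rw [← hlast]; exact (Fin.snoc_init_self g).symm
      have hglast : Fin.init g (Fin.last n) = true := by
        by_contra hc
        have hc' : Fin.init g (Fin.last n) = false := by
          rcases Bool.eq_false_or_eq_true (Fin.init g (Fin.last n)) with h | h
          · exact absurd h hc
          · exact h
        apply hmem
        rw [← hFT, hsnoc, mem_FT_snoc]
        exact Or.inr ⟨rfl, hc', rfl⟩
      refine ⟨?_, hglast⟩
      ext i
      rw [← hFT]
      constructor
      · intro hi
        rw [hsnoc, mem_FT_snoc]; exact Or.inl hi
      · intro hi
        rw [hsnoc, mem_FT_snoc] at hi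
        rcases hi with h | h
        · exact h
        · rw [hglast] at h; simp at h
    · intro g' hg'
      simp only [mem_coe, mem_filter, mem_univ, true_and] at hg' ⊢
      obtain ⟨hFT, hlast⟩ := hg'
      constructor
      · ext i
        rw [mem_FT_snoc, hFT]
        constructor
        · rintro (h | ⟨rfl, hc, _⟩)
          · exact h
          · rw [hlast] at hc; simp at hc
        · exact fun hi => Or.inl hi
      · exact Fin.snoc_last _ _
    · intro g hg
      simp only [mem_coe, mem_filter, mem_univ, true_and] at hg
      rw [← hg.2]; exact Fin.snoc_init_self g
    · intro g' _; exact Fin.init_snoc _ _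

lemma MFc_rec (n : ℕ) (S : Finset ℕ) :
    MFc (n + 1) S = if n + 1 ∈ S then 0 else MM (n + 1) S := by
  by_cases hmem : n + 1 ∈ S
  · rw [if_pos hmem]
    unfold MFc
    rw [Finset.card_eq_zero, Finset.filter_eq_empty_iff]
    rintro g -
    rintro ⟨hFT, hlast⟩
    have hsnoc : g = Fin.snoc (Fin.init g) false := by
      rw [← hlast]; exact (Fin.snoc_init_self g).symm
    have := hmem
    rw [← hFT, hsnoc, mem_FT_snoc] at this
    rcases this with h | h
    · have := (FT_sub _) h
      simp only [mem_Icc] at this; omega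
    · simp at h
  · rw [if_neg hmem]
    unfold MFc MM
    refine card_nbij' (fun g => Fin.init g) (fun g' => Fin.snoc g' false) ?_ ?_ ?_ ?_
    · intro g hg
      simp only [mem_coe, mem_filter, mem_univ, true_and] at hg ⊢
      obtain ⟨hFT, hlast⟩ := hg
      have hsnoc : g = Fin.snoc (Fin.init g) false := by
        rw [← hlast]; exact (Fin.snoc_init_self g).symm
      ext i
      rw [← hFT]
      constructor
      · intro hi
        rw [hsnoc, mem_FT_snoc]; exact Or.inl hi
      · intro hi
        rw [hsnoc, mem_FT_snoc] at hi
        rcases hi with h | h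
        · exact h
        · simp at h
    · intro g' hg'
      simp only [mem_coe, mem_filter, mem_univ, true_and] at hg' ⊢
      constructor
      · ext i
        rw [mem_FT_snoc, hg']
        constructor
        · rintro (h | ⟨rfl, _, hc⟩)
          · exact h
          · simp at hc
        · exact fun hi => Or.inl hi
      · exact Fin.snoc_last _ _
    · intro g hg
      simp only [mem_coe, mem_filter, mem_univ, true_and] at hg
      rw [← hg.2]; exact Fin.snoc_init_self g
    · intro g' _; exact Fin.init_snoc _ _

lemma FT_one (g : Fin 1 → Bool) : FTset 1 g = ∅ := by
  unfold FTset
  rw [show (1 : ℕ) - 1 = 0 from rfl, Finset.Icc_eq_empty (by omega), filter_empty]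

lemma MTc_zero (S : Finset ℕ) : MTc 0 S = if S = ∅ then 1 else 0 := by
  unfold MTc
  split_ifs with h
  · subst h
    rw [Finset.card_eq_one]
    refine ⟨fun _ => true, ?_⟩
    ext g
    simp only [mem_filter, mem_univ, true_and, mem_singleton, FT_one]
    constructor
    · rintro ⟨-, hg⟩
      funext i
      have : i = Fin.last 0 := Fin.ext (by omega)
      rw [this, hg]
    · rintro rfl; exact ⟨rfl, rfl⟩
  · rw [Finset.card_eq_zero, Finset.filter_eq_empty_iff]
    rintro g - ⟨hFT, -⟩
    exact h (by rw [← hFT, FT_one])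

lemma MFc_zero (S : Finset ℕ) : MFc 0 S = if S = ∅ then 1 else 0 := by
  unfold MFc
  split_ifs with h
  · subst h
    rw [Finset.card_eq_one]
    refine ⟨fun _ => false, ?_⟩
    ext g
    simp only [mem_filter, mem_univ, true_and, mem_singleton, FT_one]
    constructor
    · rintro ⟨-, hg⟩
      funext i
      have : i = Fin.last 0 := Fin.ext (by omega)
      rw [this, hg]
    · rintro rfl; exact ⟨rfl, rfl⟩
  · rw [Finset.card_eq_zero, Finset.filter_eq_empty_iff]
    rintro g - ⟨hFT, -⟩
    exact h (by rw [← hFT, FT_one])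

lemma MTF_parity : ∀ n : ℕ, ∀ S : Finset ℕ, S ⊆ Icc 1 n →
    ((Odd (MTc n S) ↔ ∀ i ∈ S, Odd i) ∧
      (Odd (MFc n S) ↔ ((∀ i ∈ S, Odd i) ∧ Odd (n + 1)))) := by
  intro n
  induction n with
  | zero =>
    intro S hS
    have hSe : S = ∅ := by
      rw [← Finset.subset_empty]
      rwa [show Icc 1 0 = (∅ : Finset ℕ) from Finset.Icc_eq_empty (by omega)] at hS
    subst hSe
    rw [MTc_zero, MFc_zero]
    simp [Nat.odd_iff]
  | succ n ih =>
    intro S hS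
    constructor
    · rw [MTc_rec]
      by_cases hmem : n + 1 ∈ S
      · rw [if_pos hmem]
        have hsub : S.erase (n + 1) ⊆ Icc 1 n := by
          intro i hi
          rw [mem_erase] at hi
          have := hS hi.2
          simp only [mem_Icc] at this ⊢
          omega
        rw [(ih _ hsub).2]
        constructor
        · rintro ⟨hall, hodd⟩ i hi
          by_cases h : i = n + 1
          · rw [h]; exact hodd
          · exact hall i (mem_erase.mpr ⟨h, hi⟩)
        · intro hall
          exact ⟨fun i hi => hall i (mem_of_mem_erase hi), hall _ hmem⟩
      · rw [if_neg hmem]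
        have hsub : S ⊆ Icc 1 n := by
          intro i hi
          have := hS hi
          simp only [mem_Icc] at this ⊢
          have : i ≠ n + 1 := fun hc => hmem (hc ▸ hi)
          omega
        exact (ih _ hsub).1
    · rw [MFc_rec]
      by_cases hmem : n + 1 ∈ S
      · rw [if_pos hmem]
        constructor
        · intro h; exact absurd h (by simp [Nat.odd_iff])
        · rintro ⟨hall, h2⟩
          have h1 := hall _ hmem
          rw [Nat.odd_iff] at h1 h2
          omega
      · rw [if_neg hmem, MM_split]
        have hsub : S ⊆ Icc 1 n := by
          intro i hi
          have := hS hi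
          simp only [mem_Icc] at this ⊢
          have : i ≠ n + 1 := fun hc => hmem (hc ▸ hi)
          omega
        have h1 := (ih _ hsub).1
        have h2 := (ih _ hsub).2
        rw [Nat.odd_add, h1, ← Nat.not_odd_iff_even, h2]
        by_cases hA : ∀ i ∈ S, Odd i
        · constructor
          · intro h
            refine ⟨hA, ?_⟩
            have hno : ¬ Odd (n + 1) := fun hc => h.mp hA ⟨hA, hc⟩
            rw [Nat.not_odd_iff_even, Nat.even_iff] at hno
            rw [Nat.odd_iff]
            omega
          · rintro ⟨-, h2⟩
            rw [Nat.odd_iff] at h2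
            constructor
            · rintro - ⟨-, hc⟩
              rw [Nat.odd_iff] at hc
              omega
            · intro _
              exact hA
        · constructor
          · intro h
            exact absurd (fun i hi => (h.mpr (fun hc => hA hc.1)) i hi) hA
          · rintro ⟨hall, -⟩
            exact absurd hall hA

lemma MM_parity (n : ℕ) (S : Finset ℕ) (hS : S ⊆ Icc 1 n) :
    Even (MM (n + 1) S) ↔ ((∃ i ∈ S, Even i) ∨ Odd (n + 1)) := by
  obtain ⟨h1, h2⟩ := MTF_parity n S hS
  rw [MM_split, Nat.even_add, ← Nat.not_odd_iff_even, ← Nat.not_odd_iff_even, h1, h2]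
  by_cases hA : ∀ i ∈ S, Odd i
  · have hne : ¬ ∃ i ∈ S, Even i := by
      rintro ⟨i, hi, he⟩
      have := hA i hi
      rw [Nat.odd_iff] at this
      rw [Nat.even_iff] at he
      omega
    by_cases ho : Odd (n + 1) <;> simp [hA, hne, ho]
  · have hex : ∃ i ∈ S, Even i := by
      push_neg at hA
      obtain ⟨i, hi, hno⟩ := hA
      exact ⟨i, hi, Nat.not_odd_iff_even.mp hno⟩
    simp [hA, hex]

lemma abs_bval (n : ℕ) (x : Equiv.Perm (Fin n) × (Fin n → Bool)) (p : ℕ) :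
    |bval n x p| = sval n x.1 p := by
  unfold bval sval
  by_cases h : p - 1 < n
  · rw [dif_pos h, dif_pos h]
    have hpos : (0 : ℤ) ≤ ((x.1 ⟨p - 1, h⟩ : ℕ) : ℤ) + 1 := by positivity
    cases hb : x.2 ⟨p - 1, h⟩
    · rw [if_neg (by simp [hb]), one_mul, abs_of_nonneg hpos]
    · rw [if_pos (by simp [hb]), neg_one_mul, abs_neg, abs_of_nonneg hpos]
  · rw [dif_neg h, dif_neg h]; simp

lemma sval_inj (n : ℕ) (σ : Equiv.Perm (Fin n)) {p q : ℕ} (hp1 : 1 ≤ p) (hpn : p ≤ n)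
    (hq1 : 1 ≤ q) (hqn : q ≤ n) (h : sval n σ p = sval n σ q) : p = q := by
  unfold sval at h
  rw [dif_pos (show p - 1 < n by omega), dif_pos (show q - 1 < n by omega)] at h
  have h3 : (σ ⟨p - 1, show p - 1 < n by omega⟩ : ℕ) = (σ ⟨q - 1, show q - 1 < n by omega⟩ : ℕ) := by
    omega
  have h4 := σ.injective (Fin.ext h3)
  have h5 := congrArg Fin.val h4
  simp only at h5
  omega

lemma peak_indep (n : ℕ) (σ : Equiv.Perm (Fin n)) (ε ε' : Fin n → Bool) (j : ℕ)
    (hj2 : 2 ≤ j) (hjn : j ≤ n)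
    (hd : sval n σ j < sval n σ (j - 1))
    (hm : ∀ p, j ≤ p → p < n → sval n σ p < sval n σ (p + 1))
    (he : ∀ k : Fin n, (k : ℕ) ≠ j - 1 → ε' k = ε k) :
    bPeakSetHat n (σ, ε') = bPeakSetHat n (σ, ε) := by
  have hvv : ∀ p, p ≠ j → bvalHat n (σ, ε') p = bvalHat n (σ, ε) p := by
    intro p hp
    unfold bvalHat bval
    by_cases hp0 : p = 0
    · rw [if_pos hp0, if_pos hp0]
    · rw [if_neg hp0, if_neg hp0]
      by_cases h : p - 1 < n
      · rw [dif_pos h, dif_pos h]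
        simp only [he ⟨p - 1, h⟩ (by simp only; omega)]
      · rw [dif_neg h, dif_neg h]
  have habs' : ∀ p, 1 ≤ p → |bvalHat n (σ, ε') p| = sval n σ p := by
    intro p hp
    unfold bvalHat
    rw [if_neg (by omega)]
    exact abs_bval n (σ, ε') p
  have habs : ∀ p, 1 ≤ p → |bvalHat n (σ, ε) p| = sval n σ p := by
    intro p hp
    unfold bvalHat
    rw [if_neg (by omega)]
    exact abs_bval n (σ, ε) p
  ext i
  simp only [bPeakSetHat, mem_filter]
  apply and_congr_right
  intro hi
  rw [mem_Icc] at hi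
  obtain ⟨hi1, hi2⟩ := hi
  have hn2 : 2 ≤ n := by omega
  by_cases hji : j = i
  · have e1 : bvalHat n (σ, ε') (i - 1) = bvalHat n (σ, ε) (i - 1) := hvv _ (by omega)
    have e3 : bvalHat n (σ, ε') (i + 1) = bvalHat n (σ, ε) (i + 1) := hvv _ (by omega)
    have hd' : sval n σ i < sval n σ (i - 1) := by rw [← hji]; exact hd
    have hm' : sval n σ i < sval n σ (i + 1) := by
      rw [← hji]; exact hm j (le_refl j) (by omega)
    have l1 : |bvalHat n (σ, ε') i| < |bvalHat n (σ, ε) (i - 1)| := by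
      rw [habs' _ (by omega), habs _ (by omega)]; exact hd'
    have l1b : |bvalHat n (σ, ε) i| < |bvalHat n (σ, ε) (i - 1)| := by
      rw [habs _ (by omega), habs _ (by omega)]; exact hd'
    have l2 : |bvalHat n (σ, ε') i| < |bvalHat n (σ, ε) (i + 1)| := by
      rw [habs' _ (by omega), habs _ (by omega)]; exact hm'
    have l2b : |bvalHat n (σ, ε) i| < |bvalHat n (σ, ε) (i + 1)| := by
      rw [habs _ (by omega), habs _ (by omega)]; exact hm'
    rw [e1, e3, gt_iff_neg_of_abs_lt l1, gt_iff_neg_of_abs_lt l1b,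
      gt_iff_neg_of_abs_lt l2, gt_iff_neg_of_abs_lt l2b]
  · by_cases hji' : j = i - 1
    · have hi3 : 3 ≤ i := by omega
      have e2 : bvalHat n (σ, ε') i = bvalHat n (σ, ε) i := hvv _ (by omega)
      have e3 : bvalHat n (σ, ε') (i + 1) = bvalHat n (σ, ε) (i + 1) := hvv _ (by omega)
      have hm' : sval n σ (i - 1) < sval n σ i := by
        have := hm (i - 1) (by omega) (by omega)
        have heq : i - 1 + 1 = i := by omega
        rwa [heq] at this
      have l1 : |bvalHat n (σ, ε') (i - 1)| < |bvalHat n (σ, ε) i| := by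
        rw [habs' _ (by omega), habs _ (by omega)]; exact hm'
      have l1b : |bvalHat n (σ, ε) (i - 1)| < |bvalHat n (σ, ε) i| := by
        rw [habs _ (by omega), habs _ (by omega)]; exact hm'
      rw [e2, e3, lt_iff_pos_of_abs_lt l1, lt_iff_pos_of_abs_lt l1b]
    · by_cases hji'' : j = i + 1
      · have e1 : bvalHat n (σ, ε') (i - 1) = bvalHat n (σ, ε) (i - 1) := hvv _ (by omega)
        have e2 : bvalHat n (σ, ε') i = bvalHat n (σ, ε) i := hvv _ (by omega)
        have hd' : sval n σ (i + 1) < sval n σ i := by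
          have h0 := hd
          rw [hji''] at h0
          have heq : i + 1 - 1 = i := by omega
          rwa [heq] at h0
        have l2 : |bvalHat n (σ, ε') (i + 1)| < |bvalHat n (σ, ε) i| := by
          rw [habs' _ (by omega), habs _ (by omega)]; exact hd'
        have l2b : |bvalHat n (σ, ε) (i + 1)| < |bvalHat n (σ, ε) i| := by
          rw [habs _ (by omega), habs _ (by omega)]; exact hd'
        rw [e1, e2, lt_iff_pos_of_abs_lt l2, lt_iff_pos_of_abs_lt l2b]
      · have e1 : bvalHat n (σ, ε') (i - 1) = bvalHat n (σ, ε) (i - 1) := hvv _ (by omega)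
        have e2 : bvalHat n (σ, ε') i = bvalHat n (σ, ε) i := hvv _ (by omega)
        have e3 : bvalHat n (σ, ε') (i + 1) = bvalHat n (σ, ε) (i + 1) := hvv _ (by omega)
        rw [e1, e2, e3]


def desc (n : ℕ) (σ : Equiv.Perm (Fin n)) : Finset ℕ :=
  (Icc 2 n).filter fun p => sval n σ p < sval n σ (p - 1)

lemma desc_one (n : ℕ) : desc n 1 = ∅ := by
  unfold desc
  rw [Finset.filter_eq_empty_iff]
  intro p hp
  rw [mem_Icc] at hp
  unfold sval
  rw [dif_pos (show p - 1 < n by omega), dif_pos (show p - 1 - 1 < n by omega)]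
  simp only [Equiv.Perm.one_apply]
  omega

lemma mem_desc {n : ℕ} {σ : Equiv.Perm (Fin n)} {p : ℕ} :
    p ∈ desc n σ ↔ (2 ≤ p ∧ p ≤ n) ∧ sval n σ p < sval n σ (p - 1) := by
  unfold desc; rw [mem_filter, mem_Icc]

lemma eq_one_of_desc_empty (n : ℕ) (σ : Equiv.Perm (Fin n)) (h : desc n σ = ∅) : σ = 1 := by
  have hadj : ∀ a b : Fin n, (a : ℕ) + 1 = (b : ℕ) → σ a < σ b := by
    intro a b hab
    by_contra hc
    push_neg at hc
    have hne : σ b ≠ σ a := fun hc2 => by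
      have := congrArg Fin.val (σ.injective hc2)
      omega
    have hlt : σ b < σ a := lt_of_le_of_ne hc hne
    have hmem : ((a : ℕ) + 2) ∈ desc n σ := by
      have hbn := b.2
      rw [mem_desc]
      refine ⟨⟨by omega, by omega⟩, ?_⟩
      unfold sval
      rw [dif_pos (show (a : ℕ) + 2 - 1 < n by omega),
        dif_pos (show (a : ℕ) + 2 - 1 - 1 < n by omega)]
      have e1 : (⟨(a : ℕ) + 2 - 1, show (a : ℕ) + 2 - 1 < n by omega⟩ : Fin n) = b :=
        Fin.ext (by simp only; omega)
      have e2 : (⟨(a : ℕ) + 2 - 1 - 1, show (a : ℕ) + 2 - 1 - 1 < n by omega⟩ : Fin n) = a :=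
        Fin.ext (by simp only; omega)
      rw [e1, e2]
      have hlt' : (σ b : ℕ) < (σ a : ℕ) := hlt
      omega
    rw [h] at hmem
    simp at hmem
  have hsm : StrictMono ⇑σ := by
    cases n with
    | zero => exact fun a => a.elim0
    | succ m =>
      rw [Fin.strictMono_iff_lt_succ]
      intro k
      exact hadj k.castSucc k.succ (by simp)
  have hwf : WellFoundedLT (Fin n) := inferInstance
  have h1 : ∀ x : Fin n, x ≤ σ x := fun x => hsm.le_apply (x := x)
  have hinvm : StrictMono ⇑σ⁻¹ := by
    intro a b hab
    rcases lt_trichotomy (σ⁻¹ a) (σ⁻¹ b) with hh | hh | hh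
    · exact hh
    · exfalso
      have : a = b := by
        have := congrArg σ hh
        simpa using this
      exact absurd this (ne_of_lt hab)
    · exfalso
      have := hsm hh
      simp only [Equiv.Perm.coe_inv, Equiv.apply_symm_apply] at this
      exact absurd hab (not_lt.mpr (le_of_lt this))
  have h2 : ∀ x : Fin n, x ≤ σ⁻¹ x := fun x => hinvm.le_apply (x := x)
  apply Equiv.ext
  intro x
  rw [Equiv.Perm.one_apply]
  refine le_antisymm ?_ (h1 x)
  have := hsm.monotone (h2 x)
  rwa [Equiv.Perm.coe_inv, Equiv.apply_symm_apply] at this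

lemma peak_one (n : ℕ) (g : Fin n → Bool) : bPeakSetHat n (1, g) = FTset n g := by
  ext i
  simp only [bPeakSetHat, FTset, mem_filter]
  apply and_congr_right
  intro hi
  rw [mem_Icc] at hi
  obtain ⟨hi1, hi2⟩ := hi
  have hn2 : 2 ≤ n := by omega
  have hv : ∀ p, 1 ≤ p → p ≤ n →
      bvalHat n (1, g) p = (if gv n g p then (-1 : ℤ) else 1) * p := by
    intro p h1p hpn
    unfold bvalHat bval gv
    rw [if_neg (by omega), dif_pos (show p - 1 < n by omega),
      dif_pos (show p - 1 < n by omega)]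
    simp only [Equiv.Perm.one_apply]
    have key : ∀ b : Bool, (if b then (-1 : ℤ) else 1) * (((p - 1 : ℕ) : ℤ) + 1) =
        (if b then (-1 : ℤ) else 1) * p := by
      intro b
      have hc : ((p - 1 : ℕ) : ℤ) + 1 = (p : ℤ) := by omega
      rw [hc]
    exact key (g ⟨p - 1, show p - 1 < n by omega⟩)
  have hc1 : (bvalHat n (1, g) (i - 1) < bvalHat n (1, g) i) ↔ gv n g i = false := by
    by_cases hone : i = 1
    · subst hone
      have h0 : bvalHat n (1, g) 0 = 0 := by unfold bvalHat; rw [if_pos rfl]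
      rw [show bvalHat n (1, g) (1 - 1) = 0 from h0, hv 1 (by omega) (by omega)]
      cases hb : gv n g 1 <;> simp [hb]
    · rw [hv (i - 1) (by omega) (by omega), hv i (by omega) (by omega)]
      cases ha : gv n g (i - 1) <;> cases hb : gv n g i <;> simp [ha, hb] <;> omega
  have hc2 : (bvalHat n (1, g) (i + 1) < bvalHat n (1, g) i) ↔ gv n g (i + 1) = true := by
    rw [hv (i + 1) (by omega) (by omega), hv i (by omega) (by omega)]
    cases ha : gv n g (i + 1) <;> cases hb : gv n g i <;> simp [ha, hb] <;> omega
  exact and_congr hc1 hc2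

def iot (n : ℕ) (x : Equiv.Perm (Fin n) × (Fin n → Bool)) :
    Equiv.Perm (Fin n) × (Fin n → Bool) :=
  (x.1, if h : (desc n x.1).Nonempty then
      (fun k => if (k : ℕ) = (desc n x.1).max' h - 1 then !x.2 k else x.2 k)
    else x.2)

lemma iot_invol (n : ℕ) (x : Equiv.Perm (Fin n) × (Fin n → Bool)) : iot n (iot n x) = x := by
  unfold iot
  by_cases h : (desc n x.1).Nonempty
  · simp only [dif_pos h]
    refine Prod.ext rfl ?_
    funext k
    by_cases hk : (k : ℕ) = (desc n x.1).max' h - 1 <;> simp [hk]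
  · simp only [dif_neg h]

lemma iot_ne (n : ℕ) (x : Equiv.Perm (Fin n) × (Fin n → Bool))
    (h : (desc n x.1).Nonempty) : iot n x ≠ x := by
  intro hc
  have hj := Finset.max'_mem _ h
  rw [mem_desc] at hj
  have hk : (desc n x.1).max' h - 1 < n := by omega
  have h2 := congrArg (fun y => y.2 ⟨(desc n x.1).max' h - 1, hk⟩) hc
  simp only [iot, dif_pos h, if_pos rfl] at h2
  exact Bool.not_ne_self _ h2

lemma iot_peak (n : ℕ) (x : Equiv.Perm (Fin n) × (Fin n → Bool)) :
    bPeakSetHat n (iot n x) = bPeakSetHat n x := by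
  unfold iot
  by_cases h : (desc n x.1).Nonempty
  · rw [dif_pos h]
    have hj := Finset.max'_mem _ h
    rw [mem_desc] at hj
    obtain ⟨⟨hj2, hjn⟩, hd⟩ := hj
    have hres := peak_indep n x.1 x.2
      (fun k => if (k : ℕ) = (desc n x.1).max' h - 1 then !x.2 k else x.2 k)
      ((desc n x.1).max' h) hj2 hjn hd ?_ ?_
    · rw [hres, Prod.mk.eta]
    · intro p hjp hpn
      have hnmem : p + 1 ∉ desc n x.1 := by
        intro hmem
        have := Finset.le_max' _ _ hmem
        omega
      have hle : sval n x.1 p ≤ sval n x.1 (p + 1) := by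
        by_contra hcc
        push_neg at hcc
        apply hnmem
        rw [mem_desc]
        exact ⟨⟨by omega, by omega⟩, by rwa [show p + 1 - 1 = p by omega]⟩
      refine lt_of_le_of_ne hle fun hc => ?_
      have := sval_inj n x.1 (by omega : 1 ≤ p) (by omega) (by omega : 1 ≤ p + 1) (by omega) hc
      omega
    · intro k hk
      exact if_neg hk
  · rw [dif_neg h, Prod.mk.eta]

lemma PBhat_even_iff (n : ℕ) (S : Finset ℕ) : Even (PBhat n S) ↔ Even (MM n S) := by
  classical
  unfold PBhat
  rw [← Finset.card_filter_add_card_filter_not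
    (s := univ.filter fun x : Equiv.Perm (Fin n) × (Fin n → Bool) => bPeakSetHat n x = S)
    (fun x => desc n x.1 = ∅), filter_filter, filter_filter]
  have hB : Even ((univ.filter fun x : Equiv.Perm (Fin n) × (Fin n → Bool) =>
      bPeakSetHat n x = S ∧ ¬desc n x.1 = ∅).card) := by
    apply even_card_invol (iot n)
    · intro a ha
      rw [mem_filter] at ha ⊢
      refine ⟨mem_univ _, ?_, ?_⟩
      · rw [iot_peak]; exact ha.2.1
      · exact ha.2.2
    · intro a _; exact iot_invol n a
    · intro a ha
      rw [mem_filter] at ha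
      exact iot_ne n a (Finset.nonempty_iff_ne_empty.mpr ha.2.2)
  have hA : (univ.filter fun x : Equiv.Perm (Fin n) × (Fin n → Bool) =>
      bPeakSetHat n x = S ∧ desc n x.1 = ∅).card = MM n S := by
    unfold MM
    apply card_nbij' (fun x => x.2) (fun g => (1, g))
    · intro x hx
      rw [mem_coe, mem_filter] at hx ⊢
      refine ⟨mem_univ _, ?_⟩
      have hone : x.1 = 1 := eq_one_of_desc_empty n x.1 hx.2.2
      calc FTset n x.2 = bPeakSetHat n (1, x.2) := (peak_one n x.2).symm
        _ = bPeakSetHat n (x.1, x.2) := by rw [hone]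
        _ = bPeakSetHat n x := by rw [Prod.mk.eta]
        _ = S := hx.2.1
    · intro g hg
      rw [mem_coe, mem_filter] at hg ⊢
      refine ⟨mem_univ _, ?_, desc_one n⟩
      rw [peak_one]
      exact hg.2
    · intro x hx
      rw [mem_coe, mem_filter] at hx
      have hone : x.1 = 1 := eq_one_of_desc_empty n x.1 hx.2.2
      rw [← hone]
    · intro g _; rfl
  rw [hA, Nat.even_add]
  exact ⟨fun h => h.mpr hB, fun h => iff_of_true h hB⟩

/-- with `π_0 = 0`, `#P̂_B(S,n)` is even iff `S` contains an even number
or `n` is odd; otherwise it is odd. -/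
theorem stmt10 (n : ℕ) (S : Finset ℕ)
    (hS : S ⊆ Finset.Icc 1 (n - 1)) (hcons : ∀ i ∈ S, i + 1 ∉ S) :
    Even (PBhat n S) ↔ ((∃ i ∈ S, Even i) ∨ Odd n) := by
  cases n with
  | zero =>
    have hSe : S = ∅ := by
      rw [← Finset.subset_empty]
      rwa [show Finset.Icc 1 (0 - 1) = (∅ : Finset ℕ) from Finset.Icc_eq_empty (by omega)] at hS
    subst hSe
    have h1 : PBhat 0 ∅ = 1 := by decide
    rw [h1]
    simp [Nat.even_iff, Nat.odd_iff]
  | succ m =>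
    rw [PBhat_even_iff]
    exact MM_parity m S hS
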